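/- Let q be a prime power, d a positive divisor of q−1, and ℓ ≥ 0 an integer. Suppose f(x) = x^{(q−1)/d − ℓ} + g(x) ∈ F_q[x] with 1 ≤ deg(g) < (q−1)/d − ℓ. Then the number of distinct roots of f in F_q^* is at most d(ℓ + deg(g)). -/

import Mathlib

open Polynomial

set_option maxHeartbeats 1000000 in
theorem stmt_1 {F : Type*} [Field F] [Fintype F] [DecidableEq F]
    (d ℓ : ℕ) (hd0 : 0 < d) (hd : d ∣ Fintype.card F - 1)
    (g f : F[X])
    (hg1 : 1 ≤ g.natDegree) (hgdeg : g.natDegree < (Fintype.card F - 1) / d - ℓ)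
    (hf : f = X ^ ((Fintype.card F - 1) / d - ℓ) + g) :
    (Finset.univ.filter (fun x : F => x ≠ 0 ∧ f.eval x = 0)).card
      ≤ d * (ℓ + g.natDegree) := by
  classical
  set n := (Fintype.card F - 1) / d with hn
  have hg0 : g ≠ 0 := fun h => by simp [h] at hg1
  have hln : ℓ < n := by omega
  -- auxiliary polynomials
  set T : Finset F := ((X ^ d - 1 : F[X]).roots.toFinset) with hT
  have hXd0 : (X ^ d - 1 : F[X]) ≠ 0 := by
    intro h
    have := congrArg natDegree h
    rw [natDegree_zero] at this
    have h1 : ((1 : F[X])).natDegree < (X ^ d : F[X]).natDegree := by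
      simp [natDegree_X_pow, hd0]
    rw [natDegree_sub_eq_left_of_natDegree_lt h1, natDegree_X_pow] at this
    omega
  have hTcard : T.card ≤ d := by
    calc T.card ≤ Multiset.card (X ^ d - 1 : F[X]).roots := Multiset.toFinset_card_le _
    _ ≤ (X ^ d - 1 : F[X]).natDegree := (X ^ d - 1 : F[X]).card_roots'
    _ ≤ d := by
        have h1 : ((1 : F[X])).natDegree < (X ^ d : F[X]).natDegree := by
          simp [natDegree_X_pow, hd0]
        rw [natDegree_sub_eq_left_of_natDegree_lt h1, natDegree_X_pow]
  have hpdeg : ∀ c : F, (C c + X ^ ℓ * g).natDegree = ℓ + g.natDegree := by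
    intro c
    have h1 : (C c).natDegree < (X ^ ℓ * g : F[X]).natDegree := by
      rw [natDegree_mul (pow_ne_zero _ X_ne_zero) hg0, natDegree_X_pow, natDegree_C]
      omega
    rw [natDegree_add_eq_right_of_natDegree_lt h1, natDegree_mul (pow_ne_zero _ X_ne_zero) hg0,
      natDegree_X_pow]
  have hp0 : ∀ c : F, (C c + X ^ ℓ * g) ≠ 0 := by
    intro c h
    have := hpdeg c
    rw [h, natDegree_zero] at this
    omega
  have hsub : (Finset.univ.filter (fun x : F => x ≠ 0 ∧ f.eval x = 0))
      ⊆ T.biUnion (fun c => (C c + X ^ ℓ * g).roots.toFinset) := by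
    intro x hx
    simp only [Finset.mem_filter, Finset.mem_univ, true_and] at hx
    obtain ⟨hx0, hxf⟩ := hx
    have hx1 : x ^ (Fintype.card F - 1) = 1 := FiniteField.pow_card_sub_one_eq_one x hx0
    refine Finset.mem_biUnion.mpr ⟨x ^ n, ?_, ?_⟩
    · rw [hT, Multiset.mem_toFinset, mem_roots hXd0]
      simp only [IsRoot, eval_sub, eval_pow, eval_X, eval_one, ← pow_mul]
      rw [hn, Nat.div_mul_cancel hd, hx1, sub_self]
    · rw [Multiset.mem_toFinset, mem_roots (hp0 _)]
      rw [hf] at hxf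
      simp only [eval_add, eval_pow, eval_X] at hxf
      simp only [IsRoot, eval_add, eval_C, eval_mul, eval_pow, eval_X]
      have : x ^ ℓ * g.eval x = -x ^ n := by
        have hgx : g.eval x = -x ^ (n - ℓ) := eq_neg_of_add_eq_zero_right hxf
        rw [hgx, mul_neg, ← pow_add]
        congr 2
        omega
      rw [this]
      ring
  calc (Finset.univ.filter (fun x : F => x ≠ 0 ∧ f.eval x = 0)).card
      ≤ (T.biUnion (fun c => (C c + X ^ ℓ * g).roots.toFinset)).card :=
        Finset.card_le_card hsub
    _ ≤ ∑ c ∈ T, (C c + X ^ ℓ * g).roots.toFinset.card := Finset.card_biUnion_le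
    _ ≤ ∑ c ∈ T, (ℓ + g.natDegree) := by
        refine Finset.sum_le_sum fun c _ => ?_
        calc (C c + X ^ ℓ * g).roots.toFinset.card
            ≤ Multiset.card (C c + X ^ ℓ * g).roots := Multiset.toFinset_card_le _
          _ ≤ (C c + X ^ ℓ * g).natDegree := card_roots' _
          _ = ℓ + g.natDegree := hpdeg c
    _ = T.card * (ℓ + g.natDegree) := by rw [Finset.sum_const, smul_eq_mul]
    _ ≤ d * (ℓ + g.natDegree) := Nat.mul_le_mul_right _ hTcard
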